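/- The product H₁(F)·H₂(F) for the Fermat cubic equals, up to a nonzero scalar, xyz·(x^3-y^3)·(y^3-z^3)·(z^3-x^3), whose zero locus is the extended Fermat arrangement of 12 lines. -/

import Mathlib

open MvPolynomial

noncomputable section

/-- The Fermat cubic `x³ + y³ + z³`. -/
def Fer : MvPolynomial (Fin 3) ℂ := X 0 ^ 3 + X 1 ^ 3 + X 2 ^ 3

/-- Second partial derivative `∂²Fer/∂xᵢ∂xⱼ`. -/
def D (i j : Fin 3) : MvPolynomial (Fin 3) ℂ := pderiv i (pderiv j Fer)

/-- The Hessian determinant `H = H(Fer)`. -/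
def Hdet : MvPolynomial (Fin 3) ℂ :=
  (Matrix.of fun i j : Fin 3 => pderiv i (pderiv j Fer)).det

/-- The 3×3 "Jacobian" determinant with rows the gradients of `f`, `g` and the row `r`. -/
def JacRow (f g : MvPolynomial (Fin 3) ℂ) (r : Fin 3 → MvPolynomial (Fin 3) ℂ) :
    MvPolynomial (Fin 3) ℂ :=
  (Matrix.of fun i j : Fin 3 => ![pderiv j f, pderiv j g, r j] i).det

/-- The six entries of the adjugate of the Hessian matrix of `Fer`
(in the order used by Cayley). -/
def AdjVec : Fin 6 → MvPolynomial (Fin 3) ℂ :=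
  ![D 1 1 * D 2 2 - D 1 2 ^ 2,
    D 0 0 * D 2 2 - D 0 2 ^ 2,
    D 0 0 * D 1 1 - D 0 1 ^ 2,
    D 0 1 * D 0 2 - D 0 0 * D 1 2,
    D 0 1 * D 1 2 - D 1 1 * D 0 2,
    D 0 2 * D 1 2 - D 2 2 * D 0 1]

/-- The six entries `(H_xx, H_yy, H_zz, 2H_yz, 2H_xz, 2H_xy)` of the Hessian of `H`. -/
def HVec : Fin 6 → MvPolynomial (Fin 3) ℂ :=
  ![pderiv 0 (pderiv 0 Hdet), pderiv 1 (pderiv 1 Hdet), pderiv 2 (pderiv 2 Hdet),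
    2 * pderiv 1 (pderiv 2 Hdet), 2 * pderiv 0 (pderiv 2 Hdet), 2 * pderiv 0 (pderiv 1 Hdet)]

/-- Cayley's bordered determinant `Ψ`. -/
def Psi : MvPolynomial (Fin 3) ℂ :=
  - Matrix.det !![0, pderiv 0 Hdet, pderiv 1 Hdet, pderiv 2 Hdet;
      pderiv 0 Hdet, D 0 0, D 0 1, D 0 2;
      pderiv 1 Hdet, D 0 1, D 1 1, D 1 2;
      pderiv 2 Hdet, D 0 2, D 1 2, D 2 2]

/-- Cayley's second Hessian `H₂(Fer)` (with the corrected coefficient 20 of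
Maugesten–Moe), for `d = deg Fer = 3`. -/
def SecondHessian : MvPolynomial (Fin 3) ℂ :=
  ((12 * 3 ^ 2 - 54 * 3 + 57 : ℤ) : MvPolynomial (Fin 3) ℂ) * Hdet *
      JacRow Fer Hdet (fun u => ∑ j, AdjVec j * pderiv u (HVec j))
    + (((3 - 2) * (12 * 3 - 27) : ℤ) : MvPolynomial (Fin 3) ℂ) * Hdet *
      JacRow Fer Hdet (fun u => ∑ j, pderiv u (AdjVec j) * HVec j)
    - ((20 * (3 - 2) ^ 2 : ℤ) : MvPolynomial (Fin 3) ℂ) *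
      JacRow Fer Hdet (fun u => pderiv u Psi)



lemma pd_natCast (i : Fin 3) (n : ℕ) :
    pderiv i ((n : MvPolynomial (Fin 3) ℂ)) = 0 := by
  rw [← map_natCast (C : ℂ →+* MvPolynomial (Fin 3) ℂ) n, pderiv_C]

lemma Hdet_eq : Hdet = C 216 * (X 0 * X 1 * X 2) := by
  unfold Hdet Fer
  rw [Matrix.det_fin_three]
  simp only [Matrix.of_apply, map_add, pderiv_mul, pderiv_pow, pderiv_X, Pi.single_apply,
    pd_natCast]
  norm_num [Fin.ext_iff, map_ofNat]
  ring

lemma D_eq (i j : Fin 3) : D i j =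
    ![![C 6 * X 0, 0, 0], ![0, C 6 * X 1, 0], ![0, 0, C 6 * X 2]] i j := by
  unfold D Fer
  fin_cases i <;> fin_cases j <;>
  · simp only [map_add, pderiv_mul, pderiv_pow, pderiv_X, Pi.single_apply, pd_natCast]
    norm_num [Fin.ext_iff, map_ofNat]
    try ring

lemma D00 : D 0 0 = C 6 * X 0 := D_eq 0 0
lemma D11 : D 1 1 = C 6 * X 1 := D_eq 1 1
lemma D22 : D 2 2 = C 6 * X 2 := D_eq 2 2
lemma D01 : D 0 1 = 0 := D_eq 0 1
lemma D02 : D 0 2 = 0 := D_eq 0 2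
lemma D12 : D 1 2 = 0 := D_eq 1 2

lemma pdH0 : pderiv 0 Hdet = C 216 * (X 1 * X 2) := by
  rw [Hdet_eq]
  simp only [pderiv_C_mul, pderiv_mul, pderiv_X, Pi.single_apply]
  norm_num [Fin.ext_iff]
  try ring
lemma pdH1 : pderiv 1 Hdet = C 216 * (X 0 * X 2) := by
  rw [Hdet_eq]
  simp only [pderiv_C_mul, pderiv_mul, pderiv_X, Pi.single_apply]
  norm_num [Fin.ext_iff]
  try ring
lemma pdH2 : pderiv 2 Hdet = C 216 * (X 0 * X 1) := by
  rw [Hdet_eq]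
  simp only [pderiv_C_mul, pderiv_mul, pderiv_X, Pi.single_apply]
  norm_num [Fin.ext_iff]
  try ring

lemma Psi_eq : Psi = C 1679616 *
    (X 0 ^ 3 * X 1 ^ 3 + X 1 ^ 3 * X 2 ^ 3 + X 2 ^ 3 * X 0 ^ 3) := by
  unfold Psi
  rw [pdH0, pdH1, pdH2, D00, D11, D22, D01, D02, D12]
  simp [Matrix.det_succ_row_zero, Fin.sum_univ_succ, Fin.succAbove, Fin.castSucc,
    Fin.castAdd, Fin.castLE]
  rw [show (1679616 : ℂ) = 216 * 216 * 6 * 6 by norm_num]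
  simp only [map_mul]
  ring

lemma vec6_3 {α : Type*} (a b c d e f : α) : ![a,b,c,d,e,f] 3 = d := rfl
lemma vec6_4 {α : Type*} (a b c d e f : α) : ![a,b,c,d,e,f] 4 = e := rfl
lemma vec6_5 {α : Type*} (a b c d e f : α) : ![a,b,c,d,e,f] 5 = f := rfl


/-- The product of the Hessian and the second Hessian of the Fermat cubic is, up to a
nonzero scalar, `xyz(x³-y³)(y³-z³)(z³-x³)`, defining the extended Fermat arrangement
of 12 lines. -/
theorem hessians_product_fermat :
    ∃ c : ℂ, c ≠ 0 ∧ Hdet * SecondHessian =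
      C c * (X 0 * X 1 * X 2 *
        (((X 0) ^ 3 - (X 1) ^ 3) * ((X 1) ^ 3 - (X 2) ^ 3) * ((X 2) ^ 3 - (X 0) ^ 3))) := by
  refine ⟨-14105549537280, by norm_num, ?_⟩
  have e0 : pderiv (0 : Fin 3) Fer = C 3 * X 0 ^ 2 := by
    unfold Fer
    simp only [map_add, pderiv_pow, pderiv_X, Pi.single_apply, pd_natCast]
    norm_num [Fin.ext_iff, map_ofNat]
    try ring
  have e1 : pderiv (1 : Fin 3) Fer = C 3 * X 1 ^ 2 := by
    unfold Fer
    simp only [map_add, pderiv_pow, pderiv_X, Pi.single_apply, pd_natCast]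
    norm_num [Fin.ext_iff, map_ofNat]
    try ring
  have e2 : pderiv (2 : Fin 3) Fer = C 3 * X 2 ^ 2 := by
    unfold Fer
    simp only [map_add, pderiv_pow, pderiv_X, Pi.single_apply, pd_natCast]
    norm_num [Fin.ext_iff, map_ofNat]
    try ring
  unfold SecondHessian JacRow
  rw [Psi_eq]
  simp only [AdjVec, HVec, D00, D11, D22, D01, D02, D12, pdH0, pdH1, pdH2, Hdet_eq]
  simp only [Fin.sum_univ_six, Matrix.cons_val_zero, Matrix.cons_val_one, Matrix.head_cons,
    Matrix.cons_val_two, Matrix.tail_cons, vec6_3, vec6_4, vec6_5]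
  rw [Matrix.det_fin_three, Matrix.det_fin_three, Matrix.det_fin_three]
  simp only [Matrix.of_apply, Matrix.cons_val', Matrix.cons_val_zero, Matrix.cons_val_one,
    Matrix.head_cons, Matrix.cons_val_two, Matrix.tail_cons, Matrix.empty_val',
    Matrix.cons_val_fin_one, e0, e1, e2]
  simp only [map_add, map_sub, pderiv_C_mul, pderiv_mul, pderiv_pow, pderiv_X, pderiv_C,
    Pi.single_apply, pd_natCast, map_mul]
  norm_num [Fin.ext_iff]
  simp only [map_neg, map_ofNat]
  ring
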